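/- arXiv:2203.13000 — 3 statements merged into one kernel-verified Lean document; each statement's English description precedes it below -/
import Mathlib

section
/- Let C and D be small categories and F : C ⥤ D a functor. The left Kan extension functor along F on Set-valued functors, Lan_F : (C ⥤ Type) ⥤ (D ⥤ Type) (which on objects sends X : C ⥤ Type to the functor d ↦ colim_{(c, f : F(c) ⟶ d)} X(c)), preserves finite limits if and only if for every object d : D the comma category F ↓ d (the category of costructured arrows CostructuredArrow F d, whose objects are pairs (c, f : F(c) ⟶ d)) is filtered. -/
open CategoryTheory CategoryTheory.Limits Opposite

section LanAux

variable {C D : Type} [SmallCategory C] [SmallCategory D] (F : C ⥤ D)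

/-- The value `F.map x ≫ T.hom` is invariant along the zigzags defining equality in the
colimit of `CostructuredArrow.proj F d ⋙ coyoneda.obj (op c)`. -/
lemma lanAux_invariant {d : D} {c : C}
    {p q : Σ T : CostructuredArrow F d,
      (CostructuredArrow.proj F d ⋙ coyoneda.obj (op c)).obj T}
    (h : Relation.EqvGen ((CostructuredArrow.proj F d ⋙ coyoneda.obj (op c)).ColimitTypeRel) p q) :
    F.map p.2 ≫ p.1.hom = F.map q.2 ≫ q.1.hom := by
  induction h with
  | rel p q hr =>
    obtain ⟨m, hm⟩ := hr
    rw [hm]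
    dsimp
    rw [F.map_comp]
    erw [Category.assoc, CostructuredArrow.w m]
  | refl => rfl
  | symm _ _ _ ih => exact ih.symm
  | trans _ _ _ _ _ ih1 ih2 => exact ih1.trans ih2

lemma lanAux_eq_colimit_ι {d : D} (X : C ⥤ Type) (T T' : CostructuredArrow F d)
    (x : X.obj T.left) (x' : X.obj T'.left)
    (hx : ((F.lan.obj X).map T.hom) (((F.lanUnit.app X).app T.left) x) =
      ((F.lan.obj X).map T'.hom) (((F.lanUnit.app X).app T'.left) x')) :
    colimit.ι (CostructuredArrow.proj F d ⋙ X) T x =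
      colimit.ι (CostructuredArrow.proj F d ⋙ X) T' x' := by
  have h1 := ConcreteCategory.congr_hom (F.ι_leftKanExtensionObjIsoColimit_hom X d T) x
  have h2 := ConcreteCategory.congr_hom (F.ι_leftKanExtensionObjIsoColimit_hom X d T') x'
  dsimp at h1 h2
  erw [← h1, ← h2]
  exact congrArg _ hx

end LanAux

/-- The left Kan extension functor `Lan_F : (C ⥤ Type) ⥤ (D ⥤ Type)` along a functor
`F : C ⥤ D` between small categories preserves finite limits if and only if the comma
category `F ↓ d` (i.e. `CostructuredArrow F d`) is filtered for every `d : D`. -/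
theorem lan_preservesFiniteLimits_iff_costructuredArrow_isFiltered
    {C D : Type} [SmallCategory C] [SmallCategory D] (F : C ⥤ D) :
    Nonempty (PreservesFiniteLimits (F.lan : (C ⥤ Type) ⥤ (D ⥤ Type))) ↔
      ∀ d : D, IsFiltered (CostructuredArrow F d) := by
  constructor
  · rintro ⟨hP⟩ d
    apply IsFiltered.of_cocone_nonempty.{0}
    intro J _ _ G
    let P : Jᵒᵖ ⥤ C ⥤ Type := (G ⋙ CostructuredArrow.proj F d).op ⋙ coyoneda
    -- the compatible family of elements given by the structure maps of `G`
    let t : ∀ j : Jᵒᵖ, (P ⋙ F.lan ⋙ (evaluation D Type).obj d).obj j := fun j =>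
      ((F.lan.obj (P.obj j)).map ((G.obj j.unop).hom))
        (((F.lanUnit.app (P.obj j)).app ((G.obj j.unop).left)) (𝟙 _))
    have ht : ∀ (a b : Jᵒᵖ) (u : a ⟶ b),
        (P ⋙ F.lan ⋙ (evaluation D Type).obj d).map u (t a) = t b := by
      intro a b u
      dsimp only [Functor.comp_map, evaluation_obj_map, t]
      dsimp
      have n1 := NatTrans.naturality_apply (F.lan.map (P.map u)) ((G.obj a.unop).hom)
        (((F.lanUnit.app (P.obj a)).app ((G.obj a.unop).left)) (𝟙 _))
      dsimp at n1
      rw [n1]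
      have n2 := ConcreteCategory.congr_hom (congr_app (F.lanUnit.naturality (P.map u)) ((G.obj a.unop).left))
        (𝟙 ((G.obj a.unop).left))
      erw [CategoryTheory.comp_apply] at n2
      dsimp at n2
      erw [← n2]
      have e1 : (P.map u).app ((G.obj a.unop).left) (𝟙 ((G.obj a.unop).left)) =
          (G.map u.unop).left := by
        simp [P]
        exact Category.comp_id _
      rw [e1]
      have e2 : (G.map u.unop).left =
          (P.obj b).map (G.map u.unop).left (𝟙 ((G.obj b.unop).left)) := by
        simp [P]
        exact (Category.id_comp _).symm
      rw [e2]
      have n3 := NatTrans.naturality_apply (F.lanUnit.app (P.obj b))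
        ((G.map u.unop).left) (𝟙 ((G.obj b.unop).left))
      simp only [Functor.id_obj, Functor.comp_obj, Functor.whiskeringLeft_obj_obj] at n3
      rw [n3]
      dsimp
      rw [← FunctorToTypes.map_comp_apply, CostructuredArrow.w (G.map u.unop)]
      rfl
    haveI : PreservesLimitsOfShape Jᵒᵖ (F.lan : (C ⥤ Type) ⥤ (D ⥤ Type)) :=
      hP.preservesFiniteLimits _
    let s : limit (P ⋙ F.lan ⋙ (evaluation D Type).obj d) := Types.Limit.mk _ t ht
    let ξ : (F.lan.obj (limit P)).obj d :=
      (preservesLimitIso (F.lan ⋙ (evaluation D Type).obj d) P).inv s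
    have hξ : ∀ j : Jᵒᵖ, (F.lan.map (limit.π P j)).app d ξ = t j := by
      intro j
      have h := ConcreteCategory.congr_hom (preservesLimitIso_inv_π (F.lan ⋙ (evaluation D Type).obj d) P j) s
      dsimp at h
      rw [show limit.π (P ⋙ F.lan ⋙ (evaluation D Type).obj d) j s = t j from
        Types.Limit.π_mk _ t ht j] at h
      exact h
    obtain ⟨T₀, y, hy⟩ := Types.jointly_surjective'
      ((F.leftKanExtensionObjIsoColimit (limit P) d).hom ξ)
    have hξ2 : ξ = ((F.lan.obj (limit P)).map T₀.hom)
        (((F.lanUnit.app (limit P)).app T₀.left) y) := by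
      have h1 := ConcreteCategory.congr_hom (F.ι_leftKanExtensionObjIsoColimit_inv (limit P) d T₀) y
      dsimp at h1
      rw [hy] at h1
      have h2 : (F.leftKanExtensionObjIsoColimit (limit P) d).inv
          ((F.leftKanExtensionObjIsoColimit (limit P) d).hom ξ) = ξ :=
        ConcreteCategory.congr_hom (F.leftKanExtensionObjIsoColimit (limit P) d).hom_inv_id ξ
      rw [h2] at h1
      exact h1
    -- the components of `y`
    let g : ∀ j : J, (G.obj j).left ⟶ T₀.left := fun j => (limit.π P (op j)).app T₀.left y
    have hcomm : ∀ j : J, F.map (g j) ≫ T₀.hom = (G.obj j).hom := by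
      intro j
      have key : ((F.lan.obj (P.obj (op j))).map ((G.obj j).hom))
          (((F.lanUnit.app (P.obj (op j))).app ((G.obj j).left)) (𝟙 _)) =
          ((F.lan.obj (P.obj (op j))).map T₀.hom)
            (((F.lanUnit.app (P.obj (op j))).app T₀.left) (g j)) := by
        have h := hξ (op j)
        rw [hξ2] at h
        have n1 := NatTrans.naturality_apply (F.lan.map (limit.π P (op j))) T₀.hom
          (((F.lanUnit.app (limit P)).app T₀.left) y)
        dsimp at n1
        rw [n1] at h
        have n2 := ConcreteCategory.congr_hom (congr_app (F.lanUnit.naturality (limit.π P (op j))) T₀.left) y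
        erw [CategoryTheory.comp_apply] at n2
        dsimp at n2
        erw [← n2] at h
        exact h.symm
      have hcolim := lanAux_eq_colimit_ι F (P.obj (op j)) (G.obj j) T₀ (𝟙 _) (g j) key
      have := lanAux_invariant F (Types.colimit_eq hcolim)
      dsimp at this
      erw [F.map_id, Category.id_comp] at this
      exact this.symm
    have hg : ∀ {j j' : J} (v : j ⟶ j'), (G.map v).left ≫ g j' = g j := by
      intro j j' v
      have h := ConcreteCategory.congr_hom (congr_app (limit.w P v.op) T₀.left) y
      dsimp [P] at h ⊢
      erw [CategoryTheory.comp_apply] at h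
      exact h
    exact ⟨⟨T₀,
      { app := fun j => CostructuredArrow.homMk (g j) (hcomm j)
        naturality := fun j j' v => by
          apply CostructuredArrow.hom_ext
          simpa using hg v }⟩⟩
  · intro h
    refine ⟨⟨fun J _ _ => ?_⟩⟩
    apply preservesLimitsOfShape_of_evaluation (F.lan : (C ⥤ Type) ⥤ (D ⥤ Type)) J
    intro d
    haveI := h d
    exact preservesLimitsOfShape_of_natIso (lanEvaluationIsoColim Type F d).symm
end

section
/- Let C, D, E be small categories and F : C ⥤ D a functor such that for every d : D the comma category F ↓ d (CostructuredArrow F d) is connected (in particular nonempty). Let X : E ⥤ Type be a functor. Writing π_C : C × E ⥤ E and π_D : D × E ⥤ E for the second projections, the left Kan extension along the product functor F × 𝟭_E : C × E ⥤ D × E of the composite π_C ⋙ X is naturally isomorphic to π_D ⋙ X. That is, Lan_{F × 𝟭_E}(π_C ⋙ X) ≅ π_D ⋙ X. -/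
open CategoryTheory CategoryTheory.Limits

/-- Let `F : C ⥤ D` be a functor between small categories such that every comma category
`F ↓ d` is connected, and let `X : E ⥤ Type`.  Then the left Kan extension of
`π_C ⋙ X` along `F × 𝟭 E : C × E ⥤ D × E` is naturally isomorphic to `π_D ⋙ X`,
where `π_C : C × E ⥤ E` and `π_D : D × E ⥤ E` are the second projections. -/
theorem lan_prod_id_snd_comp_iso
    {C D E : Type} [SmallCategory C] [SmallCategory D] [SmallCategory E]
    (F : C ⥤ D) (hF : ∀ d : D, IsConnected (CostructuredArrow F d)) (X : E ⥤ Type) :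
    Nonempty ((F.prod (𝟭 E)).lan.obj (CategoryTheory.Prod.snd C E ⋙ X) ≅
      CategoryTheory.Prod.snd D E ⋙ X) := by
  classical
  let L : C × E ⥤ D × E := F.prod (𝟭 E)
  let α : CategoryTheory.Prod.snd C E ⋙ X ⟶ L ⋙ (CategoryTheory.Prod.snd D E ⋙ X) :=
    { app := fun _ => 𝟙 _
      naturality := by intros; simp [L] }
  let ext : Functor.LeftExtension L (CategoryTheory.Prod.snd C E ⋙ X) :=
    Functor.LeftExtension.mk (CategoryTheory.Prod.snd D E ⋙ X) α
  have hpt : ext.IsPointwiseLeftKanExtension := by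
    rintro ⟨d, e⟩
    haveI := hF d
    -- for an object `t : CostructuredArrow F d`, the corresponding object of the comma
    -- category of `L` over `(d, e)`
    let mk2 : CostructuredArrow F d → CostructuredArrow L (d, e) :=
      fun t => CostructuredArrow.mk (Y := (t.left, e)) ((t.hom, 𝟙 e) : L.obj (t.left, e) ⟶ (d, e))
    -- any object of the comma category maps to one of the form `mk2 _`
    have key : ∀ (s : Cocone (CostructuredArrow.proj L (d, e) ⋙
          (CategoryTheory.Prod.snd C E ⋙ X))) (j : CostructuredArrow L (d, e)),
        s.ι.app j = X.map j.hom.2 ≫ s.ι.app (mk2 (CostructuredArrow.mk j.hom.1)) := by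
      intro s j
      have h := s.w (show (j : CostructuredArrow L (d, e)) ⟶ mk2 (CostructuredArrow.mk j.hom.1)
        from CostructuredArrow.homMk ((𝟙 j.left.1, j.hom.2) : j.left ⟶ (j.left.1, e)) (by
          apply Prod.ext <;> simp [L, mk2]))
      simp only [Functor.comp_map, CostructuredArrow.proj_map, CostructuredArrow.homMk_left,
        CategoryTheory.Prod.snd_map] at h
      rw [← h]
      rfl
    -- the map `t ↦ s.ι.app (mk2 t)` is constant on the connected category
    have const : ∀ (s : Cocone (CostructuredArrow.proj L (d, e) ⋙
          (CategoryTheory.Prod.snd C E ⋙ X))) (t t' : CostructuredArrow F d),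
        (s.ι.app (mk2 t) : X.obj e ⟶ s.pt) = s.ι.app (mk2 t') := by
      intro s t t'
      have hcst : ∀ (t₁ t₂ : CostructuredArrow F d), (t₁ ⟶ t₂) →
          (s.ι.app (mk2 t₁) : X.obj e ⟶ s.pt) = s.ι.app (mk2 t₂) := by
        intro t₁ t₂ φ
        have h := s.w (show mk2 t₁ ⟶ mk2 t₂ from
          CostructuredArrow.homMk ((φ.left, 𝟙 e) : (t₁.left, e) ⟶ (t₂.left, e)) (by
            apply Prod.ext <;> simp [L, mk2]))
        simp [L, mk2] at h
        refine h.symm.trans ?_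
        change X.map (𝟙 e) ≫ _ = _
        simp
        rfl
      exact constant_of_preserves_morphisms (J := CostructuredArrow F d)
        (α := X.obj e ⟶ s.pt) (fun t => s.ι.app (mk2 t)) hcst t t'
    let t₀ : CostructuredArrow F d := (inferInstance : Nonempty (CostructuredArrow F d)).some
    exact
      { desc := fun s => s.ι.app (mk2 t₀)
        fac := fun s j => by
          rw [key s j, const s (CostructuredArrow.mk j.hom.1) t₀]
          simp [ext, α, mk2]
          change (𝟙 _ ≫ X.map j.hom.2) ≫ _ = _
          simp
        uniq := fun s m hm => by
          have h := hm (mk2 t₀)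
          simp [ext, α, mk2, L] at h
          refine Eq.trans ?_ h
          change m = (𝟙 _ ≫ X.map (𝟙 e)) ≫ m
          simp
          rfl }
  haveI : (CategoryTheory.Prod.snd D E ⋙ X).IsLeftKanExtension α :=
    hpt.isLeftKanExtension
  exact ⟨Functor.leftKanExtensionUnique _ (L.lanUnit.app _) _ α⟩
end

section
/- Let C be a small category, let I be a presheaf on C (an object of PSh(C) = C^op ⥤ Type), and let S : C ⥤ C be a functor equipped with an isomorphism, natural in c : C, between the presheaves yoneda(S(c)) and yoneda(c) × I (the categorical product in PSh(C)). Then the exponentiation functor (−)^I : PSh(C) ⥤ PSh(C) (the internal hom out of I in the cartesian closed category PSh(C)) is naturally isomorphic to the precomposition functor along S^op : C^op ⥤ C^op. In particular, since precomposition along S^op has a right adjoint (right Kan extension along S^op), the functor (−)^I has a right adjoint, i.e. I is a tiny object of PSh(C). -/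
open CategoryTheory CategoryTheory.Limits MonoidalCategory

/-- Auxiliary: in a category with chosen finite products and all binary products,
`X ↦ X ⨯ I` is naturally isomorphic to `X ↦ I ⊗ X`. -/
noncomputable def prodFlipIsoTensorLeft {D : Type*} [Category.{w} D]
    [CartesianMonoidalCategory D] [HasBinaryProducts D] (I : D) :
    prod.functor.flip.obj I ≅ tensorLeft I :=
  NatIso.ofComponents
    (fun X => show X ⨯ I ≅ I ⊗ X from
      { hom := CartesianMonoidalCategory.lift prod.snd prod.fst
        inv := prod.lift (CartesianMonoidalCategory.snd I X) (CartesianMonoidalCategory.fst I X)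
        hom_inv_id := by apply Limits.prod.hom_ext <;> simp
        inv_hom_id := by
          apply CartesianMonoidalCategory.hom_ext
          · simp
            erw [prod.lift_snd]
          · simp
            erw [prod.lift_fst] })
    (fun {X Y} f => by
      change prod.map f (𝟙 I) ≫ CartesianMonoidalCategory.lift prod.snd prod.fst = CartesianMonoidalCategory.lift prod.snd prod.fst ≫ I ◁ f
      apply CartesianMonoidalCategory.hom_ext <;> simp)

/-- Let `C` be a small category, `I` a presheaf on `C`, and `S : C ⥤ C` a functor with a
natural isomorphism `yoneda (S c) ≅ yoneda c ⨯ I`.  Then the exponentiation functor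
`(−)^I` on presheaves is naturally isomorphic to precomposition along `S.op`, and in
particular `(−)^I` has a right adjoint, i.e. `I` is a tiny object of `PSh(C)`. -/
theorem exp_iso_precomp_of_yoneda_iso_prod
    {C : Type} [SmallCategory C] (I : Cᵒᵖ ⥤ Type) (S : C ⥤ C)
    (h : S ⋙ yoneda ≅ yoneda ⋙ prod.functor.flip.obj I) :
    Nonempty ((ihom I : (Cᵒᵖ ⥤ Type) ⥤ (Cᵒᵖ ⥤ Type)) ≅
        (Functor.whiskeringLeft Cᵒᵖ Cᵒᵖ Type).obj S.op) ∧
      (ihom I : (Cᵒᵖ ⥤ Type) ⥤ (Cᵒᵖ ⥤ Type)).IsLeftAdjoint := by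
  have e1 : S ⋙ yoneda ≅ yoneda ⋙ tensorLeft I :=
    h ≪≫ Functor.isoWhiskerLeft yoneda (prodFlipIsoTensorLeft I)
  have e2 : S ⋙ yoneda ≅ yoneda ⋙ S.op.lan :=
    (Functor.isoWhiskerLeft S uliftYonedaIsoYoneda.{0, 0, 0}).symm ≪≫
      Presheaf.compULiftYonedaIsoULiftYonedaCompLan S ≪≫
        Functor.isoWhiskerRight uliftYonedaIsoYoneda.{0, 0, 0} _
  haveI : PreservesColimitsOfSize.{0,0} (S.op.lan : (Cᵒᵖ ⥤ Type) ⥤ _) :=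
    (S.op.lanAdjunction Type).leftAdjoint_preservesColimits
  have iL : (tensorLeft I : (Cᵒᵖ ⥤ Type) ⥤ _) ≅ S.op.lan :=
    (Presheaf.uniqueExtensionAlongULiftYoneda (tensorLeft I)
      (e1 ≪≫ Functor.isoWhiskerRight uliftYonedaIsoYoneda.{0, 0, 0}.symm _)) ≪≫
      (Presheaf.uniqueExtensionAlongULiftYoneda S.op.lan
        (e2 ≪≫ Functor.isoWhiskerRight uliftYonedaIsoYoneda.{0, 0, 0}.symm _)).symm
  have adj2 : tensorLeft I ⊣ (Functor.whiskeringLeft Cᵒᵖ Cᵒᵖ Type).obj S.op :=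
    (S.op.lanAdjunction Type).ofNatIsoLeft iL.symm
  have iso : (ihom I : (Cᵒᵖ ⥤ Type) ⥤ _) ≅ (Functor.whiskeringLeft Cᵒᵖ Cᵒᵖ Type).obj S.op :=
    (ihom.adjunction I).rightAdjointUniq adj2
  exact ⟨⟨iso⟩, ⟨_, ⟨(S.op.ranAdjunction Type).ofNatIsoLeft iso.symm⟩⟩⟩
end
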